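/- (Example 3.1, subgaussian case.) Let δ ∈ (0, 1/2) and let ξ be a random variable such that exp( (1−δ²)·λ²/2 ) ≤ E exp(λξ) ≤ exp( λ²/2 ) for all λ ∈ ℝ. Then there exist an absolute constant c > 0 and z₀ ≥ 0 such that for all z ≥ z₀, P(ξ ≥ z) ≥ exp( −0.5·z²·(1 + cδ) ). -/

import Mathlib

open MeasureTheory ProbabilityTheory Real
open scoped ENNReal

set_option maxHeartbeats 1000000 in
/-- **Example 3.1 (subgaussian case).**  There is an absolute constant `c > 0` such that for
every `δ ∈ (0, 1/2)` and every random variable `ξ` with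
`exp ((1 − δ²) λ²/2) ≤ E exp (λ ξ) ≤ exp (λ²/2)` for all real `λ`, one has
`P(ξ ≥ z) ≥ exp (−0.5 z² (1 + c δ))` for all sufficiently large `z`. -/
theorem subgaussian_tail_lower_bound {Ω : Type*} [MeasureSpace Ω]
    [IsProbabilityMeasure (ℙ : Measure Ω)] :
    ∃ c : ℝ, 0 < c ∧
      ∀ δ : ℝ, δ ∈ Set.Ioo (0 : ℝ) (1/2) →
      ∀ ξ : Ω → ℝ, Measurable ξ →
      (∀ l : ℝ, Integrable (fun ω => Real.exp (l * ξ ω)) ℙ) →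
      (∀ l : ℝ, Real.exp ((1 - δ ^ 2) * l ^ 2 / 2) ≤ ∫ ω, Real.exp (l * ξ ω)) →
      (∀ l : ℝ, ∫ ω, Real.exp (l * ξ ω) ≤ Real.exp (l ^ 2 / 2)) →
      ∃ z₀ : ℝ, 0 ≤ z₀ ∧ ∀ z ≥ z₀,
        Real.exp (-(0.5 * z ^ 2 * (1 + c * δ))) ≤ (ℙ {ω | z ≤ ξ ω}).toReal := by
  refine ⟨17, by norm_num, ?_⟩
  rintro δ ⟨hδ0, hδ1⟩ ξ hmeas hint hlow hup
  have hδ1' : δ < 1/2 := hδ1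
  have h12 : (0:ℝ) < 1 - 2*δ := by linarith
  refine ⟨2 / (δ * Real.sqrt (1 - 2*δ)), by positivity, ?_⟩
  intro z hz
  have hsq : (0:ℝ) < Real.sqrt (1 - 2*δ) := Real.sqrt_pos.mpr h12
  have ht : 0 < δ * Real.sqrt (1 - 2*δ) := by positivity
  have hz0 : 0 < z := lt_of_lt_of_le (by positivity) hz
  -- z^2 δ^2 (1-2δ) ≥ 4
  have hz2 : 4 ≤ z^2 * (δ^2 * (1 - 2*δ)) := by
    have h1 : 2 ≤ z * (δ * Real.sqrt (1-2*δ)) := by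
      rw [ge_iff_le, div_le_iff₀ ht] at hz
      linarith
    have h2 : 4 ≤ (z * (δ * Real.sqrt (1-2*δ)))^2 := by nlinarith [h1]
    have h3 : (Real.sqrt (1-2*δ))^2 = 1-2*δ := Real.sq_sqrt h12.le
    have h4 : (z * (δ * Real.sqrt (1-2*δ)))^2 = z^2 * (δ^2 * (1-2*δ)) := by
      rw [mul_pow, mul_pow, h3]
    linarith [h4 ▸ h2]
  -- z^2 δ ≥ 32
  have hz3 : 32 ≤ z^2 * δ := by
    have h8 : δ^2 * (1 - 2*δ) ≤ δ/8 := by nlinarith [sq_nonneg (4*δ - 1), hδ0]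
    nlinarith [hz2, sq_nonneg z, hδ0]
  set s : Set Ω := {ω | z ≤ ξ ω} with hs
  have hsm : MeasurableSet s := hmeas measurableSet_Ici
  set P : ℝ := (ℙ s).toReal with hP
  have hP0 : 0 ≤ P := ENNReal.toReal_nonneg
  -- the three comparison functions
  set f1 : Ω → ℝ := fun ω => Real.exp (2*δ*z^2) * Real.exp (z * ξ ω) with hf1
  set f2 : Ω → ℝ := fun ω => Real.exp (-(2*δ*z*((1+4*δ)*z))) * Real.exp ((1+4*δ)*z * ξ ω) with hf2
  set f3 : Ω → ℝ := s.indicator (fun _ => Real.exp ((1+2*δ)*z*((1+4*δ)*z))) with hf3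
  have hintf1 : Integrable f1 ℙ := (hint z).const_mul _
  have hintf2 : Integrable f2 ℙ := (hint ((1+4*δ)*z)).const_mul _
  have hintf3 : Integrable f3 ℙ := (integrable_const _).indicator hsm
  -- pointwise bound
  have hpt : ∀ ω, Real.exp ((1+2*δ)*z * ξ ω) ≤ f1 ω + f2 ω + f3 ω := by
    intro ω
    have h3nn : 0 ≤ f3 ω := Set.indicator_nonneg (fun _ _ => (Real.exp_pos _).le) ω
    have h1nn : 0 ≤ f1 ω := by positivity
    have h2nn : 0 ≤ f2 ω := by positivity
    have hf1ω : f1 ω = Real.exp (2*δ*z^2 + z * ξ ω) := by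
      simp only [hf1, ← Real.exp_add]
    have hf2ω : f2 ω = Real.exp (-(2*δ*z*((1+4*δ)*z)) + (1+4*δ)*z * ξ ω) := by
      simp only [hf2, ← Real.exp_add]
    rcases lt_or_ge (ξ ω) z with hx | hx
    · have : Real.exp ((1+2*δ)*z * ξ ω) ≤ f1 ω := by
        rw [hf1ω]
        exact Real.exp_le_exp.mpr (by nlinarith [hx, hδ0, hz0])
      linarith
    · rcases le_or_gt (ξ ω) ((1+4*δ)*z) with hx2 | hx2
      · have hmem : ω ∈ s := hx
        have hf3ω : f3 ω = Real.exp ((1+2*δ)*z*((1+4*δ)*z)) := Set.indicator_of_mem hmem _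
        have hb : Real.exp ((1+2*δ)*z * ξ ω) ≤ f3 ω := by
          rw [hf3ω]
          exact Real.exp_le_exp.mpr (by nlinarith [hx2, hδ0, hz0])
        linarith
      · have : Real.exp ((1+2*δ)*z * ξ ω) ≤ f2 ω := by
          rw [hf2ω]
          exact Real.exp_le_exp.mpr (by nlinarith [hx2, hδ0, hz0])
        linarith
  -- the lower MGF bound transported through the pointwise bound
  have hLg : Real.exp ((1 - δ^2) * ((1+2*δ)*z)^2 / 2) ≤ ∫ ω, (f1 ω + f2 ω + f3 ω) := by
    refine le_trans (hlow ((1+2*δ)*z)) ?_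
    exact integral_mono (hint _) ((hintf1.add hintf2).add hintf3) hpt
  have hgsum : (∫ ω, (f1 ω + f2 ω + f3 ω)) = (∫ ω, f1 ω) + (∫ ω, f2 ω) + (∫ ω, f3 ω) := by
    have h1 := integral_add (hintf1.add hintf2) hintf3
    have h2 := integral_add hintf1 hintf2
    simpa [Pi.add_apply, h2] using h1
  have hI1 : (∫ ω, f1 ω) ≤ Real.exp (z^2*(1+4*δ)/2) := by
    simp only [hf1]
    calc (∫ ω, Real.exp (2*δ*z^2) * Real.exp (z * ξ ω))
        = Real.exp (2*δ*z^2) * ∫ ω, Real.exp (z * ξ ω) := integral_const_mul _ _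
      _ ≤ Real.exp (2*δ*z^2) * Real.exp (z^2/2) :=
          mul_le_mul_of_nonneg_left (hup z) (Real.exp_pos _).le
      _ = Real.exp (z^2*(1+4*δ)/2) := by
          rw [← Real.exp_add]; congr 1; ring
  have hI2 : (∫ ω, f2 ω) ≤ Real.exp (z^2*(1+4*δ)/2) := by
    simp only [hf2]
    calc (∫ ω, Real.exp (-(2*δ*z*((1+4*δ)*z))) * Real.exp ((1+4*δ)*z * ξ ω))
        = Real.exp (-(2*δ*z*((1+4*δ)*z))) * ∫ ω, Real.exp ((1+4*δ)*z * ξ ω) :=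
          integral_const_mul _ _
      _ ≤ Real.exp (-(2*δ*z*((1+4*δ)*z))) * Real.exp (((1+4*δ)*z)^2/2) :=
          mul_le_mul_of_nonneg_left (hup _) (Real.exp_pos _).le
      _ = Real.exp (z^2*(1+4*δ)/2) := by
          rw [← Real.exp_add]; congr 1; ring
  have hI3 : (∫ ω, f3 ω) = P * Real.exp ((1+2*δ)*z*((1+4*δ)*z)) := by
    rw [hf3, integral_indicator_const _ hsm]
    simp [hP, smul_eq_mul, measureReal_def]
  have hkey : Real.exp ((1 - δ^2) * ((1+2*δ)*z)^2 / 2)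
      ≤ 2 * Real.exp (z^2*(1+4*δ)/2) + P * Real.exp ((1+2*δ)*z*((1+4*δ)*z)) := by
    rw [hgsum, hI3] at hLg
    linarith [hI1, hI2]
  -- 4 exp M ≤ exp L
  have he1 : (2:ℝ) ≤ Real.exp 1 := by
    have := Real.add_one_le_exp (1:ℝ); linarith
  have hML : 4 * Real.exp (z^2*(1+4*δ)/2) ≤ Real.exp ((1 - δ^2) * ((1+2*δ)*z)^2 / 2) := by
    have h4 : (4:ℝ) ≤ Real.exp 2 := by
      have h2e : Real.exp 2 = Real.exp 1 * Real.exp 1 := by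
        rw [← Real.exp_add]; norm_num
      nlinarith [he1]
    have hprod : 4*(3+2*δ) ≤ z^2*(δ^2*(1-2*δ))*(3+2*δ) :=
      mul_le_mul_of_nonneg_right hz2 (by linarith)
    calc 4 * Real.exp (z^2*(1+4*δ)/2) ≤ Real.exp 2 * Real.exp (z^2*(1+4*δ)/2) :=
          mul_le_mul_of_nonneg_right h4 (Real.exp_pos _).le
      _ = Real.exp (2 + z^2*(1+4*δ)/2) := (Real.exp_add _ _).symm
      _ ≤ Real.exp ((1 - δ^2) * ((1+2*δ)*z)^2 / 2) := by
          apply Real.exp_le_exp.mpr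
          linarith [hprod, hδ0.le]
  have hPge : (1/2) * Real.exp ((1 - δ^2) * ((1+2*δ)*z)^2 / 2)
      ≤ P * Real.exp ((1+2*δ)*z*((1+4*δ)*z)) := by linarith
  -- divide by exp(λ b)
  have hPge2 : Real.exp ((1 - δ^2) * ((1+2*δ)*z)^2 / 2 - (1+2*δ)*z*((1+4*δ)*z)) * (1/2) ≤ P := by
    have hE : (0:ℝ) < Real.exp ((1+2*δ)*z*((1+4*δ)*z)) := Real.exp_pos _
    rw [Real.exp_sub, div_mul_eq_mul_div, div_le_iff₀ hE]
    linarith [hPge]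
  have hexpneg : Real.exp (-1 : ℝ) ≤ 1/2 := by
    rw [Real.exp_neg]
    rw [show (1:ℝ)/2 = 2⁻¹ by norm_num]
    exact inv_anti₀ (by norm_num) he1
  calc Real.exp (-(0.5 * z ^ 2 * (1 + 17 * δ)))
      ≤ Real.exp ((1 - δ^2) * ((1+2*δ)*z)^2 / 2 - (1+2*δ)*z*((1+4*δ)*z) - 1) := by
        apply Real.exp_le_exp.mpr
        have ha2 : δ^2 < 1/4 := by nlinarith
        have ha3 : δ^3 < 1/8 := by nlinarith
        have hbr : (1:ℝ) ≤ 9 - 13*δ - 4*δ^2 - 4*δ^3 := by linarith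
        have hk2 : (32:ℝ)*1 ≤ (z^2*δ)*(9 - 13*δ - 4*δ^2 - 4*δ^3) :=
          mul_le_mul hz3 hbr zero_le_one (by positivity)
        linarith [hk2]
    _ = Real.exp ((1 - δ^2) * ((1+2*δ)*z)^2 / 2 - (1+2*δ)*z*((1+4*δ)*z)) * Real.exp (-1) := by
        rw [← Real.exp_add, sub_eq_add_neg]
    _ ≤ Real.exp ((1 - δ^2) * ((1+2*δ)*z)^2 / 2 - (1+2*δ)*z*((1+4*δ)*z)) * (1/2) :=
        mul_le_mul_of_nonneg_left hexpneg (Real.exp_pos _).le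
    _ ≤ P := hPge2
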